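/- arXiv:2109.13888 — 2 statements merged into one kernel-verified Lean document; each statement's English description precedes it below -/
import Mathlib

section
/- Let σ ∈ S₄ be the permutation with σ(1)=4, σ(2)=3, σ(3)=1, σ(4)=2 (complete notation [4312]). A matrix L ∈ Lo¹₄ with entries L₂₁ = x, L₃₁ = u, L₃₂ = y, L₄₁ = w, L₄₂ = v, L₄₃ = z belongs to the Bruhat cell Bru_σ^GL (equivalently, L ∈ BL_σ) if and only if w = 0, u ≠ 0, v ≠ 0, and xyz − xv − uz ≠ 0. -/
open Matrix

/-- The group `Lo¹_m` of real lower triangular `m × m` matrices with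
all diagonal entries equal to `1`, viewed as a subset of the matrix space. -/
def Lo1 (m : ℕ) : Set (Matrix (Fin m) (Fin m) ℝ) :=
  {L | (∀ i, L i i = 1) ∧ ∀ i j : Fin m, i < j → L i j = 0}

/-- The set of invertible real upper triangular `m × m` matrices. -/
def UpInv (m : ℕ) : Set (Matrix (Fin m) (Fin m) ℝ) :=
  {U | (∀ i j : Fin m, j < i → U i j = 0) ∧ IsUnit U.det}

/-- The permutation matrix of `σ`, with `(P_σ)_{i, σ(i)} = 1` and `0` otherwise. -/
def permMat (m : ℕ) (σ : Equiv.Perm (Fin m)) : Matrix (Fin m) (Fin m) ℝ :=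
  fun i j => if σ i = j then 1 else 0

/-- The Bruhat cell `Bru_σ^GL = { U₀ P_σ U₁ : U₀, U₁ upper triangular invertible }`. -/
def Bru (m : ℕ) (σ : Equiv.Perm (Fin m)) : Set (Matrix (Fin m) (Fin m) ℝ) :=
  {M | ∃ U₀ ∈ UpInv m, ∃ U₁ ∈ UpInv m, M = U₀ * permMat m σ * U₁}

/-- `BL_σ = Lo¹ ∩ Bru_σ^GL`. -/
def BL (m : ℕ) (σ : Equiv.Perm (Fin m)) : Set (Matrix (Fin m) (Fin m) ℝ) :=
  Lo1 m ∩ Bru m σ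

/-- The permutation `[4312] ∈ S₄` (in `1`-indexed complete notation), i.e.
`σ(1) = 4, σ(2) = 3, σ(3) = 1, σ(4) = 2`, written `0`-indexed on `Fin 4`. -/
def σ4312 : Equiv.Perm (Fin 4) :=
  ⟨![3, 2, 0, 1], ![2, 3, 1, 0], by decide, by decide⟩

/-- The permutation matrix of `σ4312`, computed explicitly. -/
theorem hPmat : permMat 4 σ4312 = !![0,0,0,1; 0,0,1,0; 1,0,0,0; 0,1,0,0] := by
  ext i j
  fin_cases i <;> fin_cases j <;> simp [permMat, σ4312, Matrix.vecHead, Matrix.vecTail]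

theorem fwd (L : Matrix (Fin 4) (Fin 4) ℝ) (hL : L ∈ Lo1 4)
    (h : L ∈ Bru 4 σ4312) :
    L 3 0 = 0 ∧ L 2 0 ≠ 0 ∧ L 3 1 ≠ 0 ∧
      L 1 0 * L 2 1 * L 3 2 - L 1 0 * L 3 1 - L 2 0 * L 3 2 ≠ 0 := by
  obtain ⟨A, ⟨hA, hAdet⟩, B, ⟨hB, hBdet⟩, hM⟩ := h
  obtain ⟨hLd, hLu⟩ := hL
  have dA : A.det = A 0 0 * A 1 1 * A 2 2 * A 3 3 := by
    rw [Matrix.det_of_upperTriangular (fun i j h => hA i j h), Fin.prod_univ_four]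
  have dB : B.det = B 0 0 * B 1 1 * B 2 2 * B 3 3 := by
    rw [Matrix.det_of_upperTriangular (fun i j h => hB i j h), Fin.prod_univ_four]
  have hAne : A 0 0 * A 1 1 * A 2 2 * A 3 3 ≠ 0 := dA ▸ hAdet.ne_zero
  have hBne : B 0 0 * B 1 1 * B 2 2 * B 3 3 ≠ 0 := dB ▸ hBdet.ne_zero
  have a1 : A 1 1 ≠ 0 := fun h => hAne (by rw [h]; ring)
  have a2 : A 2 2 ≠ 0 := fun h => hAne (by rw [h]; ring)
  have a3 : A 3 3 ≠ 0 := fun h => hAne (by rw [h]; ring)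
  have b0 : B 0 0 ≠ 0 := fun h => hBne (by rw [h]; ring)
  have b1 : B 1 1 ≠ 0 := fun h => hBne (by rw [h]; ring)
  have b2 : B 2 2 ≠ 0 := fun h => hBne (by rw [h]; ring)
  have ee : ∀ i j : Fin 4, L i j = (A * permMat 4 σ4312 * B) i j := fun i j =>
    congrFun (congrFun hM i) j
  have e30 := ee 3 0
  have e20 := ee 2 0
  have e31 := ee 3 1
  have e10 := ee 1 0
  have e11 := ee 1 1
  have e12 := ee 1 2
  have e21 := ee 2 1
  have e22 := ee 2 2
  have e32 := ee 3 2
  rw [hPmat] at e30 e20 e31 e10 e11 e12 e21 e22 e32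
  simp [Matrix.mul_apply, Fin.sum_univ_four, hB 1 0 (by decide), hB 2 0 (by decide),
    hB 2 1 (by decide), hB 3 0 (by decide), hB 3 1 (by decide), hB 3 2 (by decide),
    hA 1 0 (by decide), hA 2 0 (by decide), hA 2 1 (by decide),
    hA 3 0 (by decide), hA 3 1 (by decide), hA 3 2 (by decide)]
    at e30 e20 e31 e10 e11 e12 e21 e22 e32
  rw [hLd 1] at e11
  rw [hLu 1 2 (by decide)] at e12
  rw [hLd 2] at e22
  refine ⟨e30, ?_, ?_, ?_⟩
  · rw [e20]; exact mul_ne_zero a2 b0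
  · rw [e31]; exact mul_ne_zero a3 b1
  · have key : L 1 0 * L 2 1 * L 3 2 - L 1 0 * L 3 1 - L 2 0 * L 3 2
        = A 1 1 * A 2 2 * A 3 3 * B 0 0 * B 1 1 * B 2 2 := by
      rw [e10, e20, e21, e31, e32]
      linear_combination (-(A 2 2 * A 3 3 * B 0 0 * B 1 2)) * e11
        + (A 2 2 * A 3 3 * B 0 0 * B 1 1) * e12
        + (-(A 1 2 * A 3 3 * B 0 0 * B 1 1)) * e22
    rw [key]
    exact mul_ne_zero (mul_ne_zero (mul_ne_zero (mul_ne_zero (mul_ne_zero a1 a2) a3) b0) b1) b2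

set_option maxHeartbeats 2000000 in
theorem bwd (L : Matrix (Fin 4) (Fin 4) ℝ) (hL : L ∈ Lo1 4)
    (hw : L 3 0 = 0) (hu : L 2 0 ≠ 0) (hv : L 3 1 ≠ 0)
    (hD : L 1 0 * L 2 1 * L 3 2 - L 1 0 * L 3 1 - L 2 0 * L 3 2 ≠ 0) :
    L ∈ Bru 4 σ4312 := by
  obtain ⟨hLd, hLu⟩ := hL
  set x := L 1 0 with hx
  set u := L 2 0 with hux
  set y := L 2 1 with hy
  set v := L 3 1 with hvx
  set z := L 3 2 with hz
  set D := x * y * z - x * v - u * z with hDdef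
  refine ⟨!![1, (y*z - v)/D, 1/u, -y/(u*v);
             0, 1, x/u, (u - x*y)/(u*v);
             0, 0, 1, 0;
             0, 0, 0, 1], ⟨?_, ?_⟩,
          !![u, y, 1, 0;
             0, v, z, 1;
             0, 0, D/(u*v), (x*y - u)/(u*v);
             0, 0, 0, -1/D], ⟨?_, ?_⟩, ?_⟩
  · intro i j h
    fin_cases i <;> fin_cases j <;> first | rfl | exact absurd h (by decide)
  · rw [isUnit_iff_ne_zero, Matrix.det_of_upperTriangular
      (by intro i j h; fin_cases i <;> fin_cases j <;> first | rfl | exact absurd h (by decide)),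
      Fin.prod_univ_four]
    norm_num [Matrix.vecHead, Matrix.vecTail]
    exact ⟨one_ne_zero, one_ne_zero⟩
  · intro i j h
    fin_cases i <;> fin_cases j <;> first | rfl | exact absurd h (by decide)
  · rw [isUnit_iff_ne_zero, Matrix.det_of_upperTriangular
      (by intro i j h; fin_cases i <;> fin_cases j <;> first | rfl | exact absurd h (by decide)),
      Fin.prod_univ_four]
    show u * v * (D/(u*v)) * (-1/D) ≠ 0
    field_simp
    norm_num
  · rw [hPmat]
    ext i j
    fin_cases i <;> fin_cases j <;>
      simp [Matrix.mul_apply, Fin.sum_univ_four, hLd 0, hLd 1, hLd 2, hLd 3,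
        hLu 0 1 (by decide), hLu 0 2 (by decide), hLu 0 3 (by decide),
        hLu 1 2 (by decide), hLu 1 3 (by decide), hLu 2 3 (by decide), hw,
        Matrix.vecHead, Matrix.vecTail] <;>
      (try field_simp) <;> ring

/-- a unipotent lower triangular matrix `L` (with
`x = L₂₁, u = L₃₁, y = L₃₂, w = L₄₁, v = L₄₂, z = L₄₃`, here `0`-indexed)
lies in the Bruhat cell of `[4312]` iff
`w = 0`, `u ≠ 0`, `v ≠ 0` and `xyz − xv − uz ≠ 0`. -/
theorem stmt0 (L : Matrix (Fin 4) (Fin 4) ℝ) (hL : L ∈ Lo1 4) :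
    L ∈ Bru 4 σ4312 ↔
      L 3 0 = 0 ∧ L 2 0 ≠ 0 ∧ L 3 1 ≠ 0 ∧
        L 1 0 * L 2 1 * L 3 2 - L 1 0 * L 3 1 - L 2 0 * L 3 2 ≠ 0 := by
  exact ⟨fwd L hL, fun ⟨hw, hu, hv, hD⟩ => bwd L hL hw hu hv hD⟩
end

section
/- Let Q be an (n+1)×(n+1) real signed permutation matrix, i.e., Q has exactly one nonzero entry in each row and each column, and each nonzero entry equals +1 or −1; let σ ∈ S_{n+1} be its underlying permutation and let c be the number of cycles of σ (fixed points counted as cycles). Then the orbit of Q under conjugation by the group of diagonal matrices with diagonal entries in {+1, −1}, namely {D Q D⁻¹ : D diagonal with entries ±1}, has exactly 2^{n+1−c} elements. -/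
open Matrix

section aux

variable {m : ℕ} (σ : Equiv.Perm (Fin m))

/-- The homomorphism `u ↦ (i ↦ u i * u (σ i))` on `±1` vectors. -/
def sgnHom : (Fin m → ℤˣ) →* (Fin m → ℤˣ) where
  toFun u := fun i => u i * u (σ i)
  map_one' := by funext i; simp
  map_mul' u v := by
    funext i
    simp [Pi.mul_apply, mul_mul_mul_comm]

lemma sign_inv_aux (u : Fin m → ℤˣ) (h : ∀ i, u (σ i) = u i) :
    ∀ (k : ℤ) (i), u ((σ ^ k) i) = u i := by
  have hinv : ∀ i, u (σ⁻¹ i) = u i := by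
    intro i
    have := h (σ⁻¹ i)
    rw [show σ (σ⁻¹ i) = i from σ.apply_symm_apply i] at this
    exact this.symm
  intro k
  induction k using Int.induction_on with
  | zero => simp
  | succ k ih =>
    intro i
    rw [_root_.zpow_add_one, Equiv.Perm.mul_apply, ih, h]
  | pred k ih =>
    intro i
    rw [_root_.zpow_sub_one, Equiv.Perm.mul_apply, ih, hinv]

lemma ker_card :
    Nat.card (sgnHom σ).ker =
      2 ^ Nat.card (Quotient (MulAction.orbitRel (Subgroup.zpowers σ) (Fin m))) := by
  have key : ∀ u : Fin m → ℤˣ, u ∈ (sgnHom σ).ker ↔ ∀ i, u (σ i) = u i := by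
    intro u
    constructor
    · intro hu i
      have : u i * u (σ i) = 1 := congrFun hu i
      have h2 : u i * u i = 1 := Int.units_mul_self (u i)
      exact mul_left_cancel (a := u i) (this.trans h2.symm)
    · intro hu
      funext i
      show u i * u (σ i) = 1
      rw [hu i]; exact Int.units_mul_self (u i)
  -- the kernel is equivalent to functions on the quotient
  have e : (sgnHom σ).ker ≃
      (Quotient (MulAction.orbitRel (Subgroup.zpowers σ) (Fin m)) → ℤˣ) := by
    refine
      { toFun := fun u => Quotient.lift (fun i => (u : Fin m → ℤˣ) i) ?_
        invFun := fun f => ⟨fun i => f (Quotient.mk _ i), ?_⟩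
        left_inv := ?_
        right_inv := ?_ }
    · intro x y hxy
      obtain ⟨g, hg⟩ := hxy
      obtain ⟨k, hk⟩ := Subgroup.mem_zpowers_iff.mp g.2
      have h := (key u).mp u.2
      have hx : ((σ : Equiv.Perm (Fin m)) ^ k) y = x := by rw [hk]; exact hg
      show (u : Fin m → ℤˣ) x = (u : Fin m → ℤˣ) y
      rw [← hx]
      exact sign_inv_aux σ u h k y
    · rw [key]
      intro i
      congr 1
      exact Quotient.sound ⟨⟨σ, Subgroup.mem_zpowers σ⟩, rfl⟩
    · intro u
      ext i
      rfl
    · intro f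
      funext x
      induction x using Quotient.ind
      rfl
  rw [Nat.card_congr e, Nat.card_fun]
  congr 1
  rw [Nat.card_eq_fintype_card, Fintype.card_units_int]

end aux

/-- let `Q` be a real signed permutation matrix over
`σ ∈ S_{n+1}` (i.e. `Q i (σ i) ∈ {+1, −1}` and all other entries vanish), and
let `c` be the number of cycles of `σ` (fixed points included, i.e. the number
of orbits of `⟨σ⟩` on `{1,…,n+1}`).  Then the orbit
`{D Q D⁻¹ : D diagonal with entries ±1}` of `Q` under conjugation by the group
of `±1` diagonal matrices has exactly `2^{n+1−c}` elements. -/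
theorem stmt11 (n : ℕ) (σ : Equiv.Perm (Fin (n + 1)))
    (Q : Matrix (Fin (n + 1)) (Fin (n + 1)) ℝ)
    (hQ : ∀ i j : Fin (n + 1),
      (j = σ i → Q i j = 1 ∨ Q i j = -1) ∧ (j ≠ σ i → Q i j = 0))
    (c : ℕ)
    (hc : c = Nat.card
      (Quotient (MulAction.orbitRel (Subgroup.zpowers σ) (Fin (n + 1))))) :
    Nat.card {M : Matrix (Fin (n + 1)) (Fin (n + 1)) ℝ |
        ∃ ε : Fin (n + 1) → ℝ, (∀ i, ε i = 1 ∨ ε i = -1) ∧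
          M = Matrix.diagonal ε * Q * (Matrix.diagonal ε)⁻¹} =
      2 ^ (n + 1 - c) := by
  classical
  have hQne : ∀ i, Q i (σ i) ≠ 0 := by
    intro i
    rcases (hQ i (σ i)).1 rfl with h | h <;> rw [h] <;> norm_num
  set Ψ : (Fin (n + 1) → ℤˣ) → Matrix (Fin (n + 1)) (Fin (n + 1)) ℝ :=
    fun w => Matrix.of fun i j => ((w i : ℤ) : ℝ) * Q i j with hΨdef
  have hΨinj : Function.Injective Ψ := by
    intro w w' hww
    funext i
    have := congrFun (congrFun hww i) (σ i)
    simp only [hΨdef, Matrix.of_apply] at this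
    have h2 : ((w i : ℤ) : ℝ) = ((w' i : ℤ) : ℝ) :=
      mul_right_cancel₀ (hQne i) this
    exact_mod_cast h2
  -- cast-of-units helper
  have hpm : ∀ u : ℤˣ, ((u : ℤ) : ℝ) = 1 ∨ ((u : ℤ) : ℝ) = -1 := by
    intro u
    rcases Int.units_eq_one_or u with h | h <;> rw [h] <;> norm_num
  -- conjugation computation
  have hconj : ∀ ε : Fin (n + 1) → ℝ, (∀ i, ε i = 1 ∨ ε i = -1) →
      Matrix.diagonal ε * Q * (Matrix.diagonal ε)⁻¹ =
        Matrix.of fun i j => ε i * Q i j * ε j := by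
    intro ε hε
    have hsq : ∀ i, ε i * ε i = 1 := by
      intro i; rcases hε i with h | h <;> rw [h] <;> norm_num
    have hinv : (Matrix.diagonal ε)⁻¹ = Matrix.diagonal ε := by
      apply Matrix.inv_eq_right_inv
      rw [Matrix.diagonal_mul_diagonal]
      convert Matrix.diagonal_one with i
      exact hsq i
    rw [hinv]
    funext i j
    simp [Matrix.mul_apply, Matrix.diagonal, Finset.mul_sum, mul_comm, mul_assoc, mul_left_comm]
  -- the orbit set equals the image of the range of `sgnHom σ`
  have hset : {M : Matrix (Fin (n + 1)) (Fin (n + 1)) ℝ |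
        ∃ ε : Fin (n + 1) → ℝ, (∀ i, ε i = 1 ∨ ε i = -1) ∧
          M = Matrix.diagonal ε * Q * (Matrix.diagonal ε)⁻¹} =
      Ψ '' Set.range (sgnHom σ) := by
    have hmain : ∀ u : Fin (n + 1) → ℤˣ,
        Matrix.diagonal (fun i => ((u i : ℤ) : ℝ)) * Q *
          (Matrix.diagonal (fun i => ((u i : ℤ) : ℝ)))⁻¹ = Ψ (sgnHom σ u) := by
      intro u
      rw [hconj _ (fun i => hpm (u i))]
      funext i j
      simp only [hΨdef, Matrix.of_apply, sgnHom, MonoidHom.coe_mk, OneHom.coe_mk]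
      by_cases hj : j = σ i
      · subst hj; push_cast; ring
      · rw [(hQ i j).2 hj]; ring
    ext M
    constructor
    · rintro ⟨ε, hε, rfl⟩
      set u : Fin (n + 1) → ℤˣ := fun i => if ε i = 1 then 1 else -1 with hu
      have hεu : ε = fun i => ((u i : ℤ) : ℝ) := by
        funext i
        rcases hε i with h | h <;> simp [hu, h] <;> norm_num
      refine ⟨sgnHom σ u, ⟨u, rfl⟩, ?_⟩
      rw [hεu, hmain]
    · rintro ⟨w, ⟨u, rfl⟩, rfl⟩
      exact ⟨fun i => ((u i : ℤ) : ℝ), fun i => hpm (u i), (hmain u).symm⟩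
  rw [hset, Nat.card_image_of_injective hΨinj]
  rw [← MonoidHom.coe_range]
  -- group-theoretic counting
  have hker := ker_card σ
  have hquot : Nat.card ((Fin (n + 1) → ℤˣ) ⧸ (sgnHom σ).ker) *
      Nat.card (sgnHom σ).ker = Nat.card (Fin (n + 1) → ℤˣ) :=
    (Subgroup.card_eq_card_quotient_mul_card_subgroup _).symm
  have hrange : Nat.card (sgnHom σ).range =
      Nat.card ((Fin (n + 1) → ℤˣ) ⧸ (sgnHom σ).ker) :=
    (Nat.card_congr (QuotientGroup.quotientKerEquivRange (sgnHom σ)).toEquiv).symm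
  have hE : Nat.card (Fin (n + 1) → ℤˣ) = 2 ^ (n + 1) := by
    rw [Nat.card_fun, Nat.card_eq_fintype_card, Fintype.card_units_int,
      Nat.card_eq_fintype_card, Fintype.card_fin]
  have hcle : c ≤ n + 1 := by
    rw [hc]
    have := Nat.card_le_card_of_surjective
      (Quotient.mk (MulAction.orbitRel (Subgroup.zpowers σ) (Fin (n + 1))))
      (Quotient.ind (fun a => ⟨a, rfl⟩))
    simpa using this
  have key : Nat.card (sgnHom σ).range * 2 ^ c = 2 ^ (n + 1) := by
    rw [hrange, hc, ← hker, hquot, hE]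
  have h2 : 2 ^ (n + 1 - c) * 2 ^ c = 2 ^ (n + 1) := by
    rw [← pow_add, Nat.sub_add_cancel hcle]
  exact Nat.eq_of_mul_eq_mul_right (pow_pos (by norm_num) c) (key.trans h2.symm)
end
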